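/- Assume λ₁ > μ₁ and the coexistence condition (m v − (r+v))·(1−q)·D·n̄₁ₐ > μ₂·(r+v). Then the 4×4 real matrix A(n̄₁ₐ,0,0,0) with rows (−(λ₁−μ₁), σ − C n̄₁ₐ, r − C n̄₁ₐ, −D n̄₁ₐ), (0, −κμ₁−σ, 0, q D n̄₁ₐ), (0, 0, −(r+v), (1−q)D n̄₁ₐ), (0, 0, mv, −μ₂−(1−q)D n̄₁ₐ) has an eigenvalue with strictly positive real part; hence the virus-free equilibrium is linearly unstable. -/

import Mathlib

set_option maxHeartbeats 1600000
set_option maxRecDepth 8000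

set_option maxHeartbeats 1000000 in
lemma det_fin_four_aux (M : Matrix (Fin 4) (Fin 4) ℂ) :
    M.det =
      M 0 0 * (M 1 1 * M 2 2 * M 3 3 - M 1 1*M 2 3*M 3 2 - M 1 2*M 2 1*M 3 3 + M 1 2*M 2 3*M 3 1 + M 1 3*M 2 1*M 3 2 - M 1 3*M 2 2*M 3 1)
      - M 0 1 * (M 1 0 * M 2 2 * M 3 3 - M 1 0*M 2 3*M 3 2 - M 1 2*M 2 0*M 3 3 + M 1 2*M 2 3*M 3 0 + M 1 3*M 2 0*M 3 2 - M 1 3*M 2 2*M 3 0)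
      + M 0 2 * (M 1 0 * M 2 1 * M 3 3 - M 1 0*M 2 3*M 3 1 - M 1 1*M 2 0*M 3 3 + M 1 1*M 2 3*M 3 0 + M 1 3*M 2 0*M 3 1 - M 1 3*M 2 1*M 3 0)
      - M 0 3 * (M 1 0 * M 2 1 * M 3 2 - M 1 0*M 2 2*M 3 1 - M 1 1*M 2 0*M 3 2 + M 1 1*M 2 2*M 3 0 + M 1 2*M 2 0*M 3 1 - M 1 2*M 2 1*M 3 0) := by
  rw [Matrix.det_succ_row_zero]
  norm_num [Fin.sum_univ_succ, Matrix.det_fin_three, Matrix.submatrix_apply,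
    Fin.succAbove_zero, Fin.succ_succAbove_zero, Fin.succ_succAbove_succ]
  simp only [show (Fin.succ 2 : Fin 4) = 3 from rfl, show (Fin.castSucc 2 : Fin 4) = 2 from rfl,
    show (Fin.succAbove 2 2 : Fin 4) = 3 from rfl, show (Fin.succAbove 1 2 : Fin 4) = 3 from rfl]
  ring


/-- `z : ℂ` is an eigenvalue of the real matrix `A` (i.e. of its complexification):
it is a root of the characteristic polynomial of `A` over `ℂ`. -/
noncomputable def IsEigOf {n : ℕ} (A : Matrix (Fin n) (Fin n) ℝ) (z : ℂ) : Prop :=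
  ((A.map Complex.ofReal).charpoly).IsRoot z

theorem virus_free_equilibrium_unstable
    (lam mu C D q kap sig r v mu2 m : ℝ)
    (hmu : 0 < mu) (hlm : mu < lam) (hC : 0 < C) (hD : 0 < D)
    (hq0 : 0 < q) (hq1 : q < 1) (hkap : 0 ≤ kap) (hsig : 0 < sig)
    (hr : 0 < r) (hv : 0 < v) (hmu2 : 0 < mu2) (hm : 0 < m)
    (hcoex : (m * v - (r + v)) * (1 - q) * D * ((lam - mu) / C) > mu2 * (r + v)) :
    ∃ z : ℂ,
      IsEigOf (!![-(lam - mu), sig - C * ((lam - mu) / C), r - C * ((lam - mu) / C),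
                    -(D * ((lam - mu) / C));
                  0, -(kap * mu) - sig, 0, q * D * ((lam - mu) / C);
                  0, 0, -(r + v), (1 - q) * D * ((lam - mu) / C);
                  0, 0, m * v, -mu2 - (1 - q) * D * ((lam - mu) / C)]) z ∧
      0 < z.re := by
  set nb : ℝ := (lam - mu) / C with hnb
  set e : ℝ := (1 - q) * D * nb with he
  have hnb0 : 0 < nb := div_pos (by linarith) hC
  have he0 : 0 < e := by
    have : 0 < 1 - q := by linarith
    positivity
  set T : ℝ := (r + v) + mu2 + e with hT
  set Δ : ℝ := (r + v) * (mu2 + e) - m * v * e with hΔ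
  have hT0 : 0 < T := by positivity
  have hΔ0 : Δ < 0 := by
    have h1 : (m * v - (r + v)) * (1 - q) * D * nb = (m * v - (r + v)) * e := by
      rw [he]; ring
    nlinarith [hcoex]
  have hdisc : T ^ 2 < T ^ 2 - 4 * Δ := by linarith
  set s : ℝ := Real.sqrt (T ^ 2 - 4 * Δ) with hs
  have hs2 : s ^ 2 = T ^ 2 - 4 * Δ := Real.sq_sqrt (by nlinarith)
  have hsT : T < s := by
    nlinarith [Real.sqrt_nonneg (T ^ 2 - 4 * Δ)]
  set x : ℝ := (-T + s) / 2 with hx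
  have hx0 : 0 < x := by
    rw [hx]; linarith
  have hquad : x ^ 2 + T * x + Δ = 0 := by
    rw [hx]; linear_combination hs2 / 4
  refine ⟨(x : ℂ), ?_, by simpa using hx0⟩
  unfold IsEigOf
  rw [Polynomial.IsRoot, Matrix.charpoly, ← Polynomial.coe_evalRingHom, RingHom.map_det, RingHom.mapMatrix_apply]
  have hmat : ∀ (A : Matrix (Fin 4) (Fin 4) ℝ),
      (Matrix.charmatrix (A.map Complex.ofReal)).map (Polynomial.evalRingHom (x : ℂ)) =
      (x : ℂ) • (1 : Matrix (Fin 4) (Fin 4) ℂ) - A.map Complex.ofReal := by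
    intro A
    ext i j
    by_cases h : i = j <;>
      simp [h, Matrix.charmatrix_apply, Matrix.map_apply, Matrix.one_apply, Matrix.diagonal]
  rw [hmat, det_fin_four_aux]
  norm_num [Matrix.smul_apply, Matrix.sub_apply, Matrix.one_apply, Matrix.map_apply,
    Matrix.vecHead, Matrix.vecTail, Function.comp]
  have hq' : ((x : ℂ) + (r + v)) * ((x : ℂ) + (mu2 + e)) - (m * v) * e = 0 := by
    have := hquad
    have h2 : ((x : ℂ) ^ 2 + T * x + Δ) = 0 := by
      exact_mod_cast congrArg (Complex.ofReal) this
    rw [hT, hΔ] at h2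
    push_cast at h2 ⊢
    linear_combination h2
  push_cast
  linear_combination (((x:ℂ) + (lam - mu)) * ((x:ℂ) + (kap * mu + sig))) * hq'
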